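/- arXiv:0809.4650 — 2 statements merged into one kernel-verified Lean document; each statement's English description precedes it below -/
import Mathlib

section
/- Let I = {i₁ < … < i_r} ⊆ {1,…,m}, J = {j₁ < … < j_r} ⊆ {1,…,n}, and let k ∈ {1,…,m}, l ∈ {1,…,n}. Suppose k satisfies one of: k ∈ I, k < i₁, or k > i_r, and set ε₁ = 0, 1, −1 in these respective cases; suppose l satisfies one of: l ∈ J, l < j₁, or l > j_r, and set ε₂ = 0, 1, −1 in these respective cases. If |ε₁ + ε₂| ≤ 1, then in R_{m,n} one has the identity {x_{kl}, Δ_{I,J}} = (ε₁ + ε₂)·x_{kl}·Δ_{I,J}. -/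
open MvPolynomial

/-- The quadratic Poisson bracket on the polynomial algebra of the matrix affine
Poisson space `M_{m,n}`. -/
noncomputable def pois {m n : ℕ} (f g : MvPolynomial (Fin m × Fin n) ℂ) :
    MvPolynomial (Fin m × Fin n) ℂ :=
  ∑ i : Fin m, ∑ k : Fin m, ∑ j : Fin n, ∑ l : Fin n,
    (((k : ℤ) - (i : ℤ)).sign + ((l : ℤ) - (j : ℤ)).sign) •
      (X (i, l) * X (k, j) * pderiv (i, j) f * pderiv (k, l) g)

/-- The minor `Δ_{I,J}` (equal to `0` by convention if `|I| ≠ |J|`). -/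
noncomputable def Delta {m n : ℕ} (I : Finset (Fin m)) (J : Finset (Fin n)) :
    MvPolynomial (Fin m × Fin n) ℂ :=
  if h : J.card = I.card then
    Matrix.det (Matrix.of fun a b : Fin I.card =>
      X ((I.orderIsoOfFin rfl a).1, (J.orderIsoOfFin h b).1))
  else 0

/-- Evaluation of a polynomial at a matrix. -/
noncomputable def evalM {m n : ℕ} (Y : Matrix (Fin m) (Fin n) ℂ)
    (f : MvPolynomial (Fin m × Fin n) ℂ) : ℂ :=
  eval (fun p => Y p.1 p.2) f



lemma pderiv_finset_prod {σ : Type*} [DecidableEq σ] {ι : Type*} [DecidableEq ι] (v : σ)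
    (s : Finset ι) (f : ι → MvPolynomial σ ℂ) :
    pderiv v (∏ i ∈ s, f i) = ∑ i ∈ s, (∏ j ∈ s.erase i, f j) * pderiv v (f i) := by
  induction s using Finset.induction_on with
  | empty => simp
  | @insert a s ha ih =>
    rw [Finset.prod_insert ha, pderiv_mul, ih, Finset.sum_insert ha, Finset.erase_insert ha,
      Finset.mul_sum]
    congr 1
    · exact mul_comm _ _
    apply Finset.sum_congr rfl
    intro i hi
    rw [Finset.erase_insert_of_ne (by rintro rfl; exact ha hi), Finset.prod_insert
      (fun h => ha (Finset.erase_subset _ _ h)), mul_assoc]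

lemma pderiv_det {σ : Type*} [DecidableEq σ] {N : Type*} [Fintype N] [DecidableEq N] (v : σ)
    (M : Matrix N N (MvPolynomial σ ℂ)) :
    pderiv v M.det = ∑ p, (M.updateRow p (fun q => pderiv v (M p q))).det := by
  simp_rw [Matrix.det_apply]
  rw [map_sum, Finset.sum_comm]
  refine Finset.sum_congr rfl fun τ _ => ?_
  rw [Units.smul_def, map_zsmul, pderiv_finset_prod]
  rw [← Equiv.sum_comp τ (fun p =>
    Equiv.Perm.sign τ • ∏ i, (M.updateRow p (fun q => pderiv v (M p q))) (τ i) i)]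
  simp_rw [Units.smul_def, ← Finset.smul_sum]
  congr 1
  refine Finset.sum_congr rfl fun i _ => ?_
  rw [← Finset.mul_prod_erase _ _ (Finset.mem_univ i), Matrix.updateRow_self, mul_comm]
  congr 1
  refine Finset.prod_congr rfl fun j hj => ?_
  rw [Matrix.updateRow_ne]
  exact fun h => (Finset.mem_erase.mp hj).1 (τ.injective h)

lemma det_updateRow_linear {R : Type*} [CommRing R] {N : Type*} [Fintype N] [DecidableEq N]
    (A : Matrix N N R) (p : N) {ι : Type*} (s : Finset ι) (c : ι → R) (u : ι → N → R) :
    (A.updateRow p (∑ i ∈ s, c i • u i)).det = ∑ i ∈ s, c i * (A.updateRow p (u i)).det := by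
  classical
  induction s using Finset.induction_on with
  | empty =>
    simp only [Finset.sum_empty]
    exact Matrix.det_eq_zero_of_row_eq_zero p (fun j => by simp)
  | @insert a s ha ih =>
    rw [Finset.sum_insert ha, Finset.sum_insert ha, Matrix.det_updateRow_add,
      Matrix.det_updateRow_smul, ih]

lemma det_updateCol_linear {R : Type*} [CommRing R] {N : Type*} [Fintype N] [DecidableEq N]
    (A : Matrix N N R) (p : N) {ι : Type*} (s : Finset ι) (c : ι → R) (u : ι → N → R) :
    (A.updateCol p (∑ i ∈ s, c i • u i)).det = ∑ i ∈ s, c i * (A.updateCol p (u i)).det := by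
  classical
  induction s using Finset.induction_on with
  | empty =>
    simp only [Finset.sum_empty]
    exact Matrix.det_eq_zero_of_column_eq_zero p (fun j => by simp)
  | @insert a s ha ih =>
    rw [Finset.sum_insert ha, Finset.sum_insert ha, Matrix.det_updateCol_add,
      Matrix.det_updateCol_smul, ih]

lemma sum_reduce {α : Type*} [Fintype α] [LinearOrder α] {c : ℕ} {M : Type*} [AddCommMonoid M]
    (s : Finset α) (h : s.card = c) (F : α → M) (hF : ∀ a ∉ s, F a = 0) :
    ∑ a, F a = ∑ p : Fin c, F (s.orderIsoOfFin h p) := by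
  classical
  rw [← Finset.sum_subset (Finset.subset_univ s) (fun a _ ha => hF a ha)]
  rw [← Finset.sum_coe_sort s F]
  exact (Equiv.sum_comp (s.orderIsoOfFin h).toEquiv (fun x : s => F x)).symm

lemma pois_X {m n : ℕ} (k : Fin m) (l : Fin n) (g : MvPolynomial (Fin m × Fin n) ℂ) :
    pois (X (k, l)) g = ∑ a : Fin m, ∑ b : Fin n,
      (((a : ℤ) - (k : ℤ)).sign + ((b : ℤ) - (l : ℤ)).sign) •
        (X (k, b) * X (a, l) * pderiv (a, b) g) := by
  unfold pois
  simp only [pderiv_X, Pi.single_apply, Prod.mk.injEq, Prod.ext_iff]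
  simp [ite_and, mul_ite, ite_mul, mul_zero, zero_mul, mul_one, smul_ite, smul_zero,
    Finset.sum_ite_irrel, Finset.sum_ite_eq, Finset.sum_ite_eq', Finset.sum_const_zero]

lemma main_aux {m n rc : ℕ} (ρ : Fin rc → Fin m) (γ : Fin rc → Fin n)
    (hρ : Function.Injective ρ) (hγ : Function.Injective γ)
    (k : Fin m) (l : Fin n) (ε₁ ε₂ : ℤ)
    (hk : ((∃ p₀, ρ p₀ = k) ∧ ε₁ = 0) ∨ ((∀ p, k < ρ p) ∧ ε₁ = 1) ∨ ((∀ p, ρ p < k) ∧ ε₁ = -1))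
    (hl : ((∃ q₀, γ q₀ = l) ∧ ε₂ = 0) ∨ ((∀ q, l < γ q) ∧ ε₂ = 1) ∨ ((∀ q, γ q < l) ∧ ε₂ = -1))
    (hε : |ε₁ + ε₂| ≤ 1) :
    ∑ p : Fin rc, ∑ q : Fin rc,
        (((ρ p : ℤ) - (k : ℤ)).sign + ((γ q : ℤ) - (l : ℤ)).sign) •
          (X (k, γ q) * X (ρ p, l) *
            (((Matrix.of fun a b : Fin rc => (X (ρ a, γ b) : MvPolynomial (Fin m × Fin n) ℂ))
               |>.updateRow p (Pi.single q 1)).det))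
      = (ε₁ + ε₂) • ((X (k, l) : MvPolynomial (Fin m × Fin n) ℂ) *
          (Matrix.of fun a b : Fin rc => (X (ρ a, γ b) : MvPolynomial (Fin m × Fin n) ℂ)).det) := by
  set M : Matrix (Fin rc) (Fin rc) (MvPolynomial (Fin m × Fin n) ℂ) :=
    Matrix.of fun a b : Fin rc => X (ρ a, γ b) with hM
  set C : Fin rc → Fin rc → MvPolynomial (Fin m × Fin n) ℂ :=
    fun p q => (M.updateRow p (Pi.single q 1)).det with hCdef
  show (∑ p : Fin rc, ∑ q : Fin rc,
      (((ρ p : ℤ) - (k : ℤ)).sign + ((γ q : ℤ) - (l : ℤ)).sign) •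
        (X (k, γ q) * X (ρ p, l) * C p q)) = (ε₁ + ε₂) • (X (k, l) * M.det)
  -- transpose/adjugate symmetry of the cofactors
  have hC : ∀ p q, (M.updateCol q (Pi.single p 1)).det = C p q := by
    intro p q
    rw [← Matrix.det_transpose (M.updateCol q _), ← Matrix.updateRow_transpose,
      ← Matrix.adjugate_apply M.transpose p q, ← Matrix.adjugate_transpose, Matrix.transpose_apply,
      Matrix.adjugate_apply]
  -- expanding rows/columns by standard basis vectors
  have hsingleγ : (fun q => (X (k, γ q) : MvPolynomial (Fin m × Fin n) ℂ))
      = ∑ q' : Fin rc, (X (k, γ q') : MvPolynomial (Fin m × Fin n) ℂ) • (Pi.single q' 1 : Fin rc → MvPolynomial (Fin m × Fin n) ℂ) := by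
    funext q
    rw [Finset.sum_apply]
    simp [Pi.single_apply]
  have hsingleρ : (fun p => (X (ρ p, l) : MvPolynomial (Fin m × Fin n) ℂ))
      = ∑ p' : Fin rc, (X (ρ p', l) : MvPolynomial (Fin m × Fin n) ℂ) • (Pi.single p' 1 : Fin rc → MvPolynomial (Fin m × Fin n) ℂ) := by
    funext p
    rw [Finset.sum_apply]
    simp [Pi.single_apply]
  have hRdet : ∀ p, (M.updateRow p (fun q => X (k, γ q))).det = ∑ q', X (k, γ q') * C p q' := by
    intro p
    rw [hsingleγ, det_updateRow_linear]
  have hCdet : ∀ q, (M.updateCol q (fun p => X (ρ p, l))).det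
      = ∑ p', X (ρ p', l) * C p' q := by
    intro q
    rw [hsingleρ, det_updateCol_linear]
    exact Finset.sum_congr rfl fun p' _ => by rw [hC]
  -- grouping the double sums
  have hAp : ∀ p, (∑ q, X (k, γ q) * X (ρ p, l) * C p q)
      = X (ρ p, l) * (M.updateRow p (fun q => X (k, γ q))).det := by
    intro p
    rw [hRdet p, Finset.mul_sum]
    exact Finset.sum_congr rfl fun q _ => by ring
  have hAq : ∀ q, (∑ p, X (k, γ q) * X (ρ p, l) * C p q)
      = X (k, γ q) * (M.updateCol q (fun p => X (ρ p, l))).det := by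
    intro q
    rw [hCdet q, Finset.mul_sum]
    exact Finset.sum_congr rfl fun p _ => by ring
  -- values of the replaced determinants in the "membership" cases
  have hRval : ∀ p₀, ρ p₀ = k → ∀ p,
      (M.updateRow p (fun q => X (k, γ q))).det = if p = p₀ then M.det else 0 := by
    intro p₀ hp₀ p
    have hrow : (fun q => (X (k, γ q) : MvPolynomial (Fin m × Fin n) ℂ)) = M p₀ := by
      funext q; rw [← hp₀]; rfl
    rw [hrow]
    by_cases h : p = p₀
    · subst h; rw [Matrix.updateRow_eq_self, if_pos rfl]
    · rw [if_neg h]; exact Matrix.det_updateRow_eq_zero (Ne.symm h)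
  have hCval : ∀ q₀, γ q₀ = l → ∀ q,
      (M.updateCol q (fun p => X (ρ p, l))).det = if q = q₀ then M.det else 0 := by
    intro q₀ hq₀ q
    have hcol : (fun p => (X (ρ p, l) : MvPolynomial (Fin m × Fin n) ℂ))
        = fun p => M p q₀ := by
      funext p; rw [← hq₀]; rfl
    rw [hcol]
    by_cases h : q = q₀
    · subst h; rw [Matrix.updateCol_eq_self, if_pos rfl]
    · rw [if_neg h]; exact Matrix.det_updateCol_eq_zero (Ne.symm h)
  -- the three pieces
  set T : MvPolynomial (Fin m × Fin n) ℂ :=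
    ∑ p : Fin rc, ∑ q : Fin rc, X (k, γ q) * X (ρ p, l) * C p q with hT
  set S₁ : MvPolynomial (Fin m × Fin n) ℂ :=
    ∑ p : Fin rc, ∑ q : Fin rc,
      ((ρ p : ℤ) - (k : ℤ)).sign • (X (k, γ q) * X (ρ p, l) * C p q) with hS₁
  set S₂ : MvPolynomial (Fin m × Fin n) ℂ :=
    ∑ p : Fin rc, ∑ q : Fin rc,
      ((γ q : ℤ) - (l : ℤ)).sign • (X (k, γ q) * X (ρ p, l) * C p q) with hS₂
  have hsplit : (∑ p : Fin rc, ∑ q : Fin rc,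
      (((ρ p : ℤ) - (k : ℤ)).sign + ((γ q : ℤ) - (l : ℤ)).sign) •
        (X (k, γ q) * X (ρ p, l) * C p q)) = S₁ + S₂ := by
    rw [hS₁, hS₂, ← Finset.sum_add_distrib]
    refine Finset.sum_congr rfl fun p _ => ?_
    rw [← Finset.sum_add_distrib]
    exact Finset.sum_congr rfl fun q _ => add_smul _ _ _
  -- S₁ in the three cases
  have hS1_zero : ∀ p₀, ρ p₀ = k → S₁ = 0 := by
    intro p₀ hp₀
    refine Finset.sum_eq_zero fun p _ => ?_
    rw [← Finset.smul_sum, hAp p, hRval p₀ hp₀ p]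
    by_cases h : p = p₀
    · subst h
      rw [hp₀, sub_self, Int.sign_zero, zero_smul]
    · rw [if_neg h, mul_zero, smul_zero]
  have hS2_zero : ∀ q₀, γ q₀ = l → S₂ = 0 := by
    intro q₀ hq₀
    rw [hS₂, Finset.sum_comm]
    refine Finset.sum_eq_zero fun q _ => ?_
    rw [← Finset.smul_sum, hAq q, hCval q₀ hq₀ q]
    by_cases h : q = q₀
    · subst h
      rw [hq₀, sub_self, Int.sign_zero, zero_smul]
    · rw [if_neg h, mul_zero, smul_zero]
  have hS1_pos : (∀ p, k < ρ p) → S₁ = T := by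
    intro h
    refine Finset.sum_congr rfl fun p _ => Finset.sum_congr rfl fun q _ => ?_
    have hs : ((ρ p : ℤ) - (k : ℤ)).sign = 1 := by
      rw [Int.sign_eq_one_iff_pos]
      have := h p
      rw [Fin.lt_def] at this
      omega
    rw [hs, one_smul]
  have hS1_neg : (∀ p, ρ p < k) → S₁ = -T := by
    intro h
    rw [hT, ← Finset.sum_neg_distrib]
    refine Finset.sum_congr rfl fun p _ => ?_
    rw [← Finset.sum_neg_distrib]
    refine Finset.sum_congr rfl fun q _ => ?_
    have hs : ((ρ p : ℤ) - (k : ℤ)).sign = -1 := by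
      rw [Int.sign_eq_neg_one_iff_neg]
      have := h p
      rw [Fin.lt_def] at this
      omega
    rw [hs, neg_smul, one_smul]
  have hS2_pos : (∀ q, l < γ q) → S₂ = T := by
    intro h
    refine Finset.sum_congr rfl fun p _ => Finset.sum_congr rfl fun q _ => ?_
    have hs : ((γ q : ℤ) - (l : ℤ)).sign = 1 := by
      rw [Int.sign_eq_one_iff_pos]
      have := h q
      rw [Fin.lt_def] at this
      omega
    rw [hs, one_smul]
  have hS2_neg : (∀ q, γ q < l) → S₂ = -T := by
    intro h
    rw [hT, ← Finset.sum_neg_distrib]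
    refine Finset.sum_congr rfl fun p _ => ?_
    rw [← Finset.sum_neg_distrib]
    refine Finset.sum_congr rfl fun q _ => ?_
    have hs : ((γ q : ℤ) - (l : ℤ)).sign = -1 := by
      rw [Int.sign_eq_neg_one_iff_neg]
      have := h q
      rw [Fin.lt_def] at this
      omega
    rw [hs, neg_smul, one_smul]
  -- value of T in the membership cases
  have hT_row : ∀ p₀, ρ p₀ = k → T = X (k, l) * M.det := by
    intro p₀ hp₀
    rw [hT]
    calc (∑ p : Fin rc, ∑ q : Fin rc, X (k, γ q) * X (ρ p, l) * C p q)
        = ∑ p : Fin rc, X (ρ p, l) * (if p = p₀ then M.det else 0) := by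
          refine Finset.sum_congr rfl fun p _ => ?_
          rw [hAp p, hRval p₀ hp₀ p]
      _ = X (k, l) * M.det := by
          simp only [mul_ite, mul_zero, Finset.sum_ite_eq' Finset.univ p₀, Finset.mem_univ,
            if_true, hp₀]
  have hT_col : ∀ q₀, γ q₀ = l → T = X (k, l) * M.det := by
    intro q₀ hq₀
    rw [hT, Finset.sum_comm]
    calc (∑ q : Fin rc, ∑ p : Fin rc, X (k, γ q) * X (ρ p, l) * C p q)
        = ∑ q : Fin rc, X (k, γ q) * (if q = q₀ then M.det else 0) := by
          refine Finset.sum_congr rfl fun q _ => ?_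
          rw [hAq q, hCval q₀ hq₀ q]
      _ = X (k, l) * M.det := by
          simp only [mul_ite, mul_zero, Finset.sum_ite_eq' Finset.univ q₀, Finset.mem_univ,
            if_true, hq₀]
  rw [hsplit]
  rcases hk with ⟨⟨p₀, hp₀⟩, rfl⟩ | ⟨hklt, rfl⟩ | ⟨hkgt, rfl⟩ <;>
    rcases hl with ⟨⟨q₀, hq₀⟩, rfl⟩ | ⟨hllt, rfl⟩ | ⟨hlgt, rfl⟩
  · rw [hS1_zero p₀ hp₀, hS2_zero q₀ hq₀]; simp
  · rw [hS1_zero p₀ hp₀, hS2_pos hllt, hT_row p₀ hp₀]; simp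
  · rw [hS1_zero p₀ hp₀, hS2_neg hlgt, hT_row p₀ hp₀]; simp
  · rw [hS1_pos hklt, hS2_zero q₀ hq₀, hT_col q₀ hq₀]; simp
  · norm_num at hε
  · rw [hS1_pos hklt, hS2_neg hlgt]; simp
  · rw [hS1_neg hkgt, hS2_zero q₀ hq₀, hT_col q₀ hq₀]; simp
  · rw [hS1_neg hkgt, hS2_pos hllt]; simp
  · norm_num at hε

/-- **[GSV, Lemma 3.2].** If `sign(I−k)` and `sign(J−l)` are defined, with values
`ε₁`, `ε₂`, and `|ε₁ + ε₂| ≤ 1`, then `{x_{kl}, Δ_{I,J}} = (ε₁+ε₂)·x_{kl}·Δ_{I,J}`. -/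
theorem bracket_entry_minor_eigen (m n : ℕ) (r : ℕ)
    (I : Finset (Fin m)) (J : Finset (Fin n))
    (hI : I.card = r) (hJ : J.card = r)
    (k : Fin m) (l : Fin n) (ε₁ ε₂ : ℤ)
    (hk : (k ∈ I ∧ ε₁ = 0) ∨ ((∀ i ∈ I, k < i) ∧ ε₁ = 1) ∨ ((∀ i ∈ I, i < k) ∧ ε₁ = -1))
    (hl : (l ∈ J ∧ ε₂ = 0) ∨ ((∀ j ∈ J, l < j) ∧ ε₂ = 1) ∨ ((∀ j ∈ J, j < l) ∧ ε₂ = -1))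
    (hε : |ε₁ + ε₂| ≤ 1) :
    pois (X (k, l)) (Delta I J) = (ε₁ + ε₂) • (X (k, l) * Delta I J) := by
  subst hI
  set ρ : Fin I.card → Fin m := fun p => ((I.orderIsoOfFin rfl p : Fin m)) with hρdef
  set γ : Fin I.card → Fin n := fun q => ((J.orderIsoOfFin hJ q : Fin n)) with hγdef
  have hρinj : Function.Injective ρ := fun a b h => (I.orderIsoOfFin rfl).injective (Subtype.ext h)
  have hγinj : Function.Injective γ := fun a b h => (J.orderIsoOfFin hJ).injective (Subtype.ext h)
  have hρmem : ∀ p, ρ p ∈ I := fun p => (I.orderIsoOfFin rfl p).2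
  have hγmem : ∀ q, γ q ∈ J := fun q => (J.orderIsoOfFin hJ q).2
  have hρsurj : ∀ a ∈ I, ∃ p, ρ p = a := by
    intro a ha
    obtain ⟨p, hp⟩ := (I.orderIsoOfFin rfl).surjective ⟨a, ha⟩
    exact ⟨p, congrArg Subtype.val hp⟩
  have hγsurj : ∀ b ∈ J, ∃ q, γ q = b := by
    intro b hb
    obtain ⟨q, hq⟩ := (J.orderIsoOfFin hJ).surjective ⟨b, hb⟩
    exact ⟨q, congrArg Subtype.val hq⟩
  set M : Matrix (Fin I.card) (Fin I.card) (MvPolynomial (Fin m × Fin n) ℂ) :=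
    Matrix.of fun a b : Fin I.card => X (ρ a, γ b) with hM
  have hdelta : Delta I J = M.det := by
    rw [Delta, dif_pos hJ]
  -- derivative computations
  have hpd0 : ∀ (a : Fin m) (b : Fin n), a ∉ I ∨ b ∉ J → pderiv (a, b) M.det = 0 := by
    intro a b hab
    rw [pderiv_det]
    refine Finset.sum_eq_zero fun p _ => ?_
    refine Matrix.det_eq_zero_of_row_eq_zero p fun q => ?_
    rw [Matrix.updateRow_self]
    refine pderiv_X_of_ne fun h => ?_
    rcases hab with ha | hb
    · have h1 : ρ p = a := congrArg Prod.fst h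
      exact ha (h1 ▸ hρmem p)
    · have h2 : γ q = b := congrArg Prod.snd h
      exact hb (h2 ▸ hγmem q)
  have hpdm : ∀ p q, pderiv (ρ p, γ q) M.det = (M.updateRow p (Pi.single q 1)).det := by
    intro p q
    rw [pderiv_det, Finset.sum_eq_single p]
    · have hrow : (fun q' => pderiv (ρ p, γ q) (M p q'))
          = (Pi.single q 1 : Fin I.card → MvPolynomial (Fin m × Fin n) ℂ) := by
        funext q'
        show pderiv (ρ p, γ q) (X (ρ p, γ q')) = _
        rcases eq_or_ne q' q with rfl | h
        · simp
        · rw [pderiv_X_of_ne (fun hc => h (hγinj (congrArg Prod.snd hc))), Pi.single_eq_of_ne h]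
      rw [hrow]
    · intro p' _ hp'
      refine Matrix.det_eq_zero_of_row_eq_zero p' fun q' => ?_
      rw [Matrix.updateRow_self]
      exact pderiv_X_of_ne fun hc => hp' (hρinj (congrArg Prod.fst hc))
    · intro h
      exact absurd (Finset.mem_univ p) h
  -- reduce the Poisson bracket to a sum over the minor's indices
  rw [hdelta, pois_X]
  rw [sum_reduce I rfl (fun a => ∑ b : Fin n,
      (((a : ℤ) - (k : ℤ)).sign + ((b : ℤ) - (l : ℤ)).sign) •
        (X (k, b) * X (a, l) * pderiv (a, b) M.det))
      (fun a ha => Finset.sum_eq_zero fun b _ => by rw [hpd0 a b (Or.inl ha), mul_zero, smul_zero])]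
  have hstep : ∀ p : Fin I.card, (∑ b : Fin n,
      (((ρ p : ℤ) - (k : ℤ)).sign + ((b : ℤ) - (l : ℤ)).sign) •
        (X (k, b) * X (ρ p, l) * pderiv (ρ p, b) M.det))
      = ∑ q : Fin I.card,
      (((ρ p : ℤ) - (k : ℤ)).sign + ((γ q : ℤ) - (l : ℤ)).sign) •
        (X (k, γ q) * X (ρ p, l) * (M.updateRow p (Pi.single q 1)).det) := by
    intro p
    rw [sum_reduce J hJ (fun b =>
      (((ρ p : ℤ) - (k : ℤ)).sign + ((b : ℤ) - (l : ℤ)).sign) •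
        (X (k, b) * X (ρ p, l) * pderiv (ρ p, b) M.det))
      (fun b hb => by simp only [hpd0 (ρ p) b (Or.inr hb), mul_zero, smul_zero])]
    exact Finset.sum_congr rfl fun q _ => by rw [hpdm p q]
  rw [Finset.sum_congr rfl fun p _ => hstep p]
  -- apply the main computation
  refine main_aux ρ γ hρinj hγinj k l ε₁ ε₂ ?_ ?_ hε
  · rcases hk with ⟨hkI, h1⟩ | ⟨hkl, h1⟩ | ⟨hkg, h1⟩
    · exact Or.inl ⟨hρsurj k hkI, h1⟩
    · exact Or.inr (Or.inl ⟨fun p => hkl _ (hρmem p), h1⟩)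
    · exact Or.inr (Or.inr ⟨fun p => hkg _ (hρmem p), h1⟩)
  · rcases hl with ⟨hlJ, h1⟩ | ⟨hll, h1⟩ | ⟨hlg, h1⟩
    · exact Or.inl ⟨hγsurj l hlJ, h1⟩
    · exact Or.inr (Or.inl ⟨fun q => hll _ (hγmem q), h1⟩)
    · exact Or.inr (Or.inr ⟨fun q => hlg _ (hγmem q), h1⟩)
end

section
/- The fraction field F_n is generated as a field extension of ℂ by the Gelfand–Zeitlin Hamiltonians together with the strictly lower-triangular variables: the subfield of F_n generated by ℂ, the set {Δ_{l;k}/Δ'_{l;l−k} : 1 ≤ k < l ≤ n}, the set {Δ_l : 1 ≤ l ≤ n}, and the set {x_{ij} : 1 ≤ j < i ≤ n} is all of F_n. -/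
open MvPolynomial

/-- The coordinate ring `R_n = ℂ[x_{ij}]` of `M_n`. -/
abbrev Rn (n : ℕ) := MvPolynomial (Fin n × Fin n) ℂ

/-- The field of rational functions `F_n = ℂ(M_n)`. -/
abbrev Fn (n : ℕ) := FractionRing (Rn n)

/-- The interval `[a,b]` (in 1-based indexing) inside `{1,…,n}`, as a finset of `Fin n`. -/
def iv (n a b : ℕ) : Finset (Fin n) :=
  Finset.univ.filter fun i => a ≤ (i : ℕ) + 1 ∧ (i : ℕ) + 1 ≤ b

/-- `Δ_{l;k}`: the upper-right `k×k` minor of the principal `l×l` submatrix. -/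
noncomputable def Dul (n l k : ℕ) : Rn n := Delta (iv n 1 k) (iv n (l - k + 1) l)

/-- `Δ'_{l;k}`: the lower-left `k×k` minor of the principal `l×l` submatrix. -/
noncomputable def Dll (n l k : ℕ) : Rn n := Delta (iv n (l - k + 1) l) (iv n 1 k)

/-- `Δ_l`: the principal `l×l` minor. -/
noncomputable def Dpr (n l : ℕ) : Rn n := Delta (iv n 1 l) (iv n 1 l)

/-- The extension of the quadratic Poisson bracket to the field of rational functions,
determined by `{P/Q, S/T} = ({P,S}QT − {P,T}QS − {Q,S}PT + {Q,T}PS)/(Q²T²)`. -/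
noncomputable def poisF (n : ℕ) (f g : Fn n) : Fn n :=
  let φ := algebraMap (Rn n) (Fn n)
  let P := (IsLocalization.sec (nonZeroDivisors (Rn n)) f).1
  let Q := ((IsLocalization.sec (nonZeroDivisors (Rn n)) f).2 : Rn n)
  let S := (IsLocalization.sec (nonZeroDivisors (Rn n)) g).1
  let T := ((IsLocalization.sec (nonZeroDivisors (Rn n)) g).2 : Rn n)
  (φ (pois P S) * φ Q * φ T - φ (pois P T) * φ Q * φ S
    - φ (pois Q S) * φ P * φ T + φ (pois Q T) * φ P * φ S)
    / (φ Q ^ 2 * φ T ^ 2)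

/-- The Gelfand–Zeitlin Hamiltonians for the quadratic Poisson structure, as a subset of
the field of rational functions `F_n`: the ratios `Δ_{l;k}/Δ'_{l;l−k}` for
`1 ≤ k < l ≤ n` together with the principal minors `Δ_l` for `1 ≤ l ≤ n`. -/
noncomputable def GZset (n : ℕ) : Set (Fn n) :=
  {g | ∃ k l, 1 ≤ k ∧ k < l ∧ l ≤ n ∧
      g = algebraMap (Rn n) (Fn n) (Dul n l k) / algebraMap (Rn n) (Fn n) (Dll n l (l - k))}
    ∪ {g | ∃ l, 1 ≤ l ∧ l ≤ n ∧ g = algebraMap (Rn n) (Fn n) (Dpr n l)}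

section GZProof

variable {n : ℕ}

lemma mem_iv {a b : ℕ} {i : Fin n} : i ∈ iv n a b ↔ a ≤ (i : ℕ) + 1 ∧ (i : ℕ) + 1 ≤ b := by
  simp [iv]

lemma iv_card {a b : ℕ} (ha : 1 ≤ a) (hb : b ≤ n) (hab : a ≤ b) :
    (iv n a b).card = b + 1 - a := by
  have : iv n a b = Finset.map
      ⟨fun t : Fin (b + 1 - a) => (⟨a - 1 + (t : ℕ), by omega⟩ : Fin n),
       fun s t hst => by
        simp only [Fin.mk.injEq] at hst
        exact Fin.ext (by omega)⟩ Finset.univ := by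
    ext i
    simp only [mem_iv, Finset.mem_map, Finset.mem_univ, true_and, Function.Embedding.coeFn_mk]
    constructor
    · rintro ⟨h1, h2⟩
      exact ⟨⟨(i : ℕ) + 1 - a, by omega⟩, Fin.ext (by show a - 1 + ((i : ℕ) + 1 - a) = (i : ℕ); omega)⟩
    · rintro ⟨t, rfl⟩
      have := t.2
      show a ≤ a - 1 + (t : ℕ) + 1 ∧ a - 1 + (t : ℕ) + 1 ≤ b
      omega
  rw [this, Finset.card_map, Finset.card_univ, Fintype.card_fin]

lemma iv_orderIso_val {a b : ℕ} (ha : 1 ≤ a) (hb : b ≤ n) (hab : a ≤ b) {m : ℕ}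
    (h : (iv n a b).card = m) (t : Fin m) :
    (((iv n a b).orderIsoOfFin h t : Fin n) : ℕ) = a - 1 + (t : ℕ) := by
  have hm : m = b + 1 - a := by rw [← h, iv_card ha hb hab]
  subst hm
  have hf : (fun t : Fin (b + 1 - a) => (⟨a - 1 + (t : ℕ), by omega⟩ : Fin n))
      = (iv n a b).orderEmbOfFin h := by
    apply Finset.orderEmbOfFin_unique
    · intro x; simp [mem_iv]; omega
    · intro s t hst
      simp only [Fin.mk_lt_mk, Fin.lt_def]
      omega
  rw [Finset.coe_orderIsoOfFin_apply, ← hf]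

lemma Delta_det {m : ℕ} (I J : Finset (Fin n)) (hI : I.card = m) (hJ : J.card = m)
    (r c : Fin m → Fin n)
    (hr : ∀ a, (I.orderIsoOfFin hI a : Fin n) = r a)
    (hc : ∀ b, (J.orderIsoOfFin hJ b : Fin n) = c b) :
    Delta I J = (Matrix.of fun a b : Fin m => X (r a, c b) : Matrix _ _ (Rn n)).det := by
  subst hI
  have h : J.card = I.card := hJ
  rw [Delta, dif_pos h]
  congr 1
  funext a b
  simp only [Matrix.of_apply]
  rw [← hr a, ← hc b]

lemma det_mem {m : ℕ} (E : IntermediateField ℂ (Fn n)) (M : Matrix (Fin m) (Fin m) (Rn n))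
    (h : ∀ a b, algebraMap (Rn n) (Fn n) (M a b) ∈ E) :
    algebraMap (Rn n) (Fn n) M.det ∈ E := by
  let N : Matrix (Fin m) (Fin m) E := fun a b => ⟨algebraMap (Rn n) (Fn n) (M a b), h a b⟩
  have : algebraMap (Rn n) (Fn n) M.det = E.val N.det := by
    rw [RingHom.map_det, AlgHom.map_det]
    congr 1
  rw [this]
  exact (N.det).2

lemma det_X_ne_zero {m : ℕ} (r c : Fin m → Fin n)
    (hr : Function.Injective r) (hc : Function.Injective c) :
    (Matrix.of fun a b : Fin m => (X (r a, c b) : Rn n)).det ≠ 0 := by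
  intro h0
  set v : Fin n × Fin n → ℂ := fun p => if ∃ a, r a = p.1 ∧ c a = p.2 then (1 : ℂ) else 0
  have := congrArg (MvPolynomial.eval v) h0
  rw [map_zero, RingHom.map_det, RingHom.mapMatrix_apply] at this
  have hM : (Matrix.of fun a b : Fin m => (X (r a, c b) : Rn n)).map (MvPolynomial.eval v)
      = (1 : Matrix (Fin m) (Fin m) ℂ) := by
    ext a b
    simp only [Matrix.map_apply, Matrix.of_apply, eval_X, Matrix.one_apply, v]
    by_cases hab : a = b
    · subst hab; rw [if_pos ⟨a, rfl, rfl⟩, if_pos rfl]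
    · rw [if_neg, if_neg hab]
      rintro ⟨a', h1, h2⟩
      exact hab (hr h1 ▸ (hc h2 ▸ rfl : a' = b) ▸ rfl)
  rw [hM, Matrix.det_one] at this
  exact (one_ne_zero : (1:ℂ) ≠ 0) this

lemma det_X_update_ne_zero {m : ℕ} (r c : Fin (m + 1) → Fin n)
    (hr : Function.Injective r) (hc : Function.Injective c) :
    ((Matrix.of fun a b : Fin (m + 1) => (X (r a, c b) : Rn n)).updateRow (Fin.last m)
      (Pi.single (Fin.last m) 1)).det ≠ 0 := by
  intro h0
  set v : Fin n × Fin n → ℂ :=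
    fun p => if ∃ a, a ≠ Fin.last m ∧ r a = p.1 ∧ c a = p.2 then (1 : ℂ) else 0
  have := congrArg (MvPolynomial.eval v) h0
  rw [map_zero, RingHom.map_det, RingHom.mapMatrix_apply] at this
  have hM : ((Matrix.of fun a b : Fin (m + 1) => (X (r a, c b) : Rn n)).updateRow (Fin.last m)
      (Pi.single (Fin.last m) 1)).map (MvPolynomial.eval v)
      = (1 : Matrix (Fin (m + 1)) (Fin (m + 1)) ℂ) := by
    ext a b
    by_cases ha : a = Fin.last m
    · subst ha
      simp only [Matrix.map_apply, Matrix.updateRow_self, Matrix.one_apply]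
      rw [Pi.single_apply]
      split_ifs with h1 h2 h2
      · exact map_one _
      · exact absurd h1.symm h2
      · exact absurd h2.symm h1
      · exact map_zero _
    · rw [Matrix.map_apply, Matrix.updateRow_ne ha]
      simp only [Matrix.of_apply, eval_X, Matrix.one_apply, v]
      by_cases hab : a = b
      · subst hab; rw [if_pos ⟨a, ha, rfl, rfl⟩, if_pos rfl]
      · rw [if_neg, if_neg hab]
        rintro ⟨a', _, h1, h2⟩
        exact hab (hr h1 ▸ (hc h2 ▸ rfl : a' = b) ▸ rfl)
  rw [hM, Matrix.det_one] at this
  exact (one_ne_zero : (1:ℂ) ≠ 0) this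

lemma master {m : ℕ} (E : IntermediateField ℂ (Fn n)) (r c : Fin (m + 1) → Fin n)
    (hr : Function.Injective r) (hc : Function.Injective c)
    (hmem : ∀ a b : Fin (m + 1), (a ≠ Fin.last m ∨ b ≠ Fin.last m) →
      algebraMap (Rn n) (Fn n) (X (r a, c b)) ∈ E)
    (hdet : algebraMap (Rn n) (Fn n)
      (Matrix.of fun a b : Fin (m + 1) => (X (r a, c b) : Rn n)).det ∈ E) :
    algebraMap (Rn n) (Fn n) (X (r (Fin.last m), c (Fin.last m))) ∈ E := by
  set φ := algebraMap (Rn n) (Fn n) with hφ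
  set t := Fin.last m with ht
  set M : Matrix (Fin (m + 1)) (Fin (m + 1)) (Rn n) := Matrix.of fun a b => X (r a, c b) with hMdef
  set u : Fin (m + 1) → Rn n := Function.update (M t) t 0 with hu
  set w : Fin (m + 1) → Rn n := Pi.single t 1 with hw
  have hrow : M t = u + (M t t) • w := by
    funext b
    by_cases hb : b = t
    · subst hb
      simp [hu, hw, Pi.single_apply]
    · simp [hu, hw, Pi.single_apply, hb, Function.update_of_ne hb]
  have hdec : M.det = (M.updateRow t u).det + M t t * (M.updateRow t w).det := by
    conv_lhs => rw [← Matrix.updateRow_eq_self M t, hrow]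
    rw [Matrix.det_updateRow_add]
    congr 1
    rw [Matrix.det_updateRow_smul]
  have hDne : (M.updateRow t w).det ≠ 0 := det_X_update_ne_zero r c hr hc
  have hφDne : φ ((M.updateRow t w).det) ≠ 0 := by
    simpa using (map_ne_zero_iff φ (IsFractionRing.injective (Rn n) (Fn n))).mpr hDne
  have h0 : algebraMap (Rn n) (Fn n) ((M.updateRow t u).det) ∈ E := by
    apply det_mem
    intro a b
    by_cases ha : a = t
    · subst ha
      rw [Matrix.updateRow_self]
      by_cases hb : b = t
      · subst hb; simp only [hu, Function.update_self, map_zero]; exact zero_mem E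
      · rw [hu, Function.update_of_ne hb]
        exact hmem _ _ (Or.inr hb)
    · rw [Matrix.updateRow_ne ha]
      exact hmem _ _ (Or.inl ha)
  have hD : algebraMap (Rn n) (Fn n) ((M.updateRow t w).det) ∈ E := by
    apply det_mem
    intro a b
    by_cases ha : a = t
    · subst ha
      rw [Matrix.updateRow_self, hw, Pi.single_apply]
      split_ifs
      · rw [map_one]; exact one_mem E
      · rw [map_zero]; exact zero_mem E
    · rw [Matrix.updateRow_ne ha]
      exact hmem _ _ (Or.inl ha)
  have key : φ (X (r t, c t)) * φ ((M.updateRow t w).det)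
      = φ M.det - φ ((M.updateRow t u).det) := by
    rw [← map_mul, ← map_sub]
    congr 1
    rw [hdec]
    have : M t t = X (r t, c t) := rfl
    rw [this]
    ring
  have : φ (X (r t, c t)) = (φ M.det - φ ((M.updateRow t u).det)) / φ ((M.updateRow t w).det) :=
    (eq_div_iff hφDne).mpr key
  rw [this]
  exact div_mem (sub_mem hdet h0) hD

end GZProof

set_option maxHeartbeats 1000000 in
set_option synthInstance.maxHeartbeats 400000 in
/-- **Generation of `ℂ(Mₙ)` by the Gelfand–Zeitlin Hamiltonians and the strictly
lower-triangular variables:** the subfield of `Fₙ` generated over `ℂ` by the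
Gelfand–Zeitlin Hamiltonians and the `x_{ij}` with `j < i` is all of `Fₙ`. -/
theorem Fn_generated_by_GZ_and_lower_triangular (n : ℕ) (hn : 0 < n) :
    IntermediateField.adjoin ℂ
        ((GZset n ∪
          {g : Fn n | ∃ i j : Fin n, (j : ℕ) < (i : ℕ) ∧
            g = algebraMap (Rn n) (Fn n) (X (i, j))}) : Set (Fn n)) = ⊤ := by
  set φ := algebraMap (Rn n) (Fn n) with hφ
  set E := IntermediateField.adjoin ℂ
        ((GZset n ∪
          {g : Fn n | ∃ i j : Fin n, (j : ℕ) < (i : ℕ) ∧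
            g = algebraMap (Rn n) (Fn n) (X (i, j))}) : Set (Fn n)) with hE
  have hsub : ∀ x, x ∈ (GZset n ∪
      {g : Fn n | ∃ i j : Fin n, (j : ℕ) < (i : ℕ) ∧
        g = algebraMap (Rn n) (Fn n) (X (i, j))}) → x ∈ E :=
    fun x hx => IntermediateField.subset_adjoin ℂ _ hx
  have S1 : ∀ i j : Fin n, (j : ℕ) < (i : ℕ) → φ (X (i, j)) ∈ E :=
    fun i j h => hsub _ (Or.inr ⟨i, j, h, rfl⟩)
  have S2 : ∀ l, 1 ≤ l → l ≤ n → φ (Dpr n l) ∈ E :=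
    fun l h1 h2 => hsub _ (Or.inl (Or.inr ⟨l, h1, h2, rfl⟩))
  have S3 : ∀ k l, 1 ≤ k → k < l → l ≤ n →
      φ (Dul n l k) / φ (Dll n l (l - k)) ∈ E :=
    fun k l h1 h2 h3 => hsub _ (Or.inl (Or.inl ⟨k, l, h1, h2, h3, rfl⟩))
  have main : ∀ L : ℕ, ∀ i j : Fin n, (j : ℕ) < L → φ (X (i, j)) ∈ E := by
    intro L
    induction L with
    | zero => intro i j h; exact absurd h (Nat.not_lt_zero _)
    | succ L IH =>
      intro i j hj
      rcases Nat.lt_succ_iff_lt_or_eq.mp hj with h | h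
      · exact IH i j h
      · have hL : L < n := h ▸ j.isLt
        -- recover the strictly-upper entries of column L
        have QL : ∀ I : ℕ, ∀ i' : Fin n, (i' : ℕ) < I → (i' : ℕ) < L → φ (X (i', j)) ∈ E := by
          intro I
          induction I with
          | zero => intro i' h1 h2; exact absurd h1 (Nat.not_lt_zero _)
          | succ I IH2 =>
            intro i' h1 h2
            rcases Nat.lt_succ_iff_lt_or_eq.mp h1 with h1 | h1
            · exact IH2 i' h1 h2
            · -- i'.val = I, I < L
              have hIL : I < L := h1 ▸ h2
              set r : Fin (I + 1) → Fin n := fun a => ⟨(a : ℕ), by omega⟩ with hrdef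
              set c : Fin (I + 1) → Fin n :=
                fun b => ⟨L - I + (b : ℕ), by have := b.2; omega⟩ with hcdef
              have hr : Function.Injective r := by
                intro a b hab
                simp only [hrdef, Fin.mk.injEq] at hab
                exact Fin.ext hab
              have hc : Function.Injective c := by
                intro a b hab
                simp only [hcdef, Fin.mk.injEq] at hab
                exact Fin.ext (by omega)
              have hDul : Dul n (L + 1) (I + 1)
                  = (Matrix.of fun a b : Fin (I + 1) => X (r a, c b) : Matrix _ _ (Rn n)).det := by
                have e1 : L + 1 - (I + 1) + 1 = L - I + 1 := by omega
                rw [Dul, e1]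
                refine Delta_det _ _ (by rw [iv_card] <;> omega) (by rw [iv_card] <;> omega) r c
                  ?_ ?_
                · intro a
                  refine Fin.ext ?_
                  rw [iv_orderIso_val (by omega) (by omega) (by omega)]
                  simp [hrdef]
                · intro b
                  refine Fin.ext ?_
                  rw [iv_orderIso_val (by omega) (by omega) (by omega)]
                  simp [hcdef] <;> omega
              set r' : Fin (L - I) → Fin n :=
                fun a => ⟨I + 1 + (a : ℕ), by have := a.2; omega⟩ with hr'def
              set c' : Fin (L - I) → Fin n :=
                fun b => ⟨(b : ℕ), by have := b.2; omega⟩ with hc'def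
              have hDll : Dll n (L + 1) (L - I)
                  = (Matrix.of fun a b : Fin (L - I) => X (r' a, c' b) : Matrix _ _ (Rn n)).det := by
                have e1 : L + 1 - (L - I) + 1 = I + 2 := by omega
                rw [Dll, e1]
                refine Delta_det _ _ (by rw [iv_card] <;> omega) (by rw [iv_card] <;> omega) r' c'
                  ?_ ?_
                · intro a
                  refine Fin.ext ?_
                  rw [iv_orderIso_val (by omega) (by omega) (by omega)]
                  simp [hr'def] <;> omega
                · intro b
                  refine Fin.ext ?_
                  rw [iv_orderIso_val (by omega) (by omega) (by omega)]
                  simp [hc'def]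
              have hDllne : φ (Dll n (L + 1) (L - I)) ≠ 0 := by
                rw [hDll]
                have := det_X_ne_zero r' c'
                  (fun a b hab => by
                    simp only [hr'def, Fin.mk.injEq] at hab; exact Fin.ext (by omega))
                  (fun a b hab => by
                    simp only [hc'def, Fin.mk.injEq] at hab; exact Fin.ext hab)
                exact (map_ne_zero_iff φ (IsFractionRing.injective (Rn n) (Fn n))).mpr this
              have hDllmem : φ (Dll n (L + 1) (L - I)) ∈ E := by
                rw [hDll]
                apply det_mem
                intro a b
                exact IH (r' a) (c' b) (by simp [hc'def]; have := b.2; omega)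
              have hratio : φ (Dul n (L + 1) (I + 1)) / φ (Dll n (L + 1) (L - I)) ∈ E := by
                have e : L + 1 - (I + 1) = L - I := by omega
                have := S3 (I + 1) (L + 1) (by omega) (by omega) (by omega)
                rwa [e] at this
              have hDulmem : φ (Dul n (L + 1) (I + 1)) ∈ E := by
                have : φ (Dul n (L + 1) (I + 1))
                    = φ (Dul n (L + 1) (I + 1)) / φ (Dll n (L + 1) (L - I))
                      * φ (Dll n (L + 1) (L - I)) := (div_mul_cancel₀ _ hDllne).symm
                rw [this]
                exact mul_mem hratio hDllmem
              have hmas := master E r c hr hc ?_ ?_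
              · have e1 : r (Fin.last I) = i' := Fin.ext (by simp [hrdef, Fin.val_last]; omega)
                have e2 : c (Fin.last I) = j := Fin.ext (by simp [hcdef, Fin.val_last]; omega)
                rwa [e1, e2] at hmas
              · intro a b hab
                by_cases hb : b = Fin.last I
                · have ha : a ≠ Fin.last I := by
                    rcases hab with ha | hb'
                    · exact ha
                    · exact absurd hb hb'
                  have haI : (a : ℕ) < I := by
                    have h2 := a.2
                    have : (a : ℕ) ≠ I := fun hh => ha (Fin.ext (by simp [Fin.val_last, hh]))
                    omega
                  have e2 : c b = j := by
                    subst hb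
                    exact Fin.ext (by simp [hcdef, Fin.val_last]; omega)
                  rw [e2]
                  exact IH2 (r a) (by simp [hrdef]; omega) (by simp [hrdef]; omega)
                · have hbI : (b : ℕ) < I := by
                    have h2 := b.2
                    have : (b : ℕ) ≠ I := fun hh => hb (Fin.ext (by simp [Fin.val_last, hh]))
                    omega
                  exact IH (r a) (c b) (by simp [hcdef]; omega)
              · rw [← hDul]
                exact hDulmem
        rcases lt_trichotomy ((i : ℕ)) L with hi | hi | hi
        · exact QL L i hi hi
        · -- diagonal entry
          set rd : Fin (L + 1) → Fin n := fun a => ⟨(a : ℕ), by have := a.2; omega⟩ with hrddef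
          have hrd : Function.Injective rd := by
            intro a b hab
            simp only [hrddef, Fin.mk.injEq] at hab
            exact Fin.ext hab
          have hDpr : Dpr n (L + 1)
              = (Matrix.of fun a b : Fin (L + 1) => X (rd a, rd b) : Matrix _ _ (Rn n)).det := by
            rw [Dpr]
            refine Delta_det _ _ (by rw [iv_card] <;> omega) (by rw [iv_card] <;> omega) rd rd
              ?_ ?_ <;>
            · intro a
              refine Fin.ext ?_
              rw [iv_orderIso_val (by omega) (by omega) (by omega)]
              simp [hrddef]
          have hmas := master E rd rd hrd hrd ?_ ?_
          · have e1 : rd (Fin.last L) = i := Fin.ext (by simp [hrddef, Fin.val_last]; omega)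
            have e2 : rd (Fin.last L) = j := Fin.ext (by simp [hrddef, Fin.val_last]; omega)
            rw [e1] at hmas
            nth_rewrite 2 [← e1] at hmas
            rw [e2] at hmas
            exact hmas
          · intro a b hab
            by_cases hb : b = Fin.last L
            · have ha : a ≠ Fin.last L := by
                rcases hab with ha | hb'
                · exact ha
                · exact absurd hb hb'
              have haL : (a : ℕ) < L := by
                have h2 := a.2
                have : (a : ℕ) ≠ L := fun hh => ha (Fin.ext (by simp [Fin.val_last, hh]))
                omega
              have e2 : rd b = j := by
                subst hb
                exact Fin.ext (by simp [hrddef, Fin.val_last]; omega)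
              rw [e2]
              exact QL L (rd a) (by simp [hrddef]; omega) (by simp [hrddef]; omega)
            · have hbL : (b : ℕ) < L := by
                have h2 := b.2
                have : (b : ℕ) ≠ L := fun hh => hb (Fin.ext (by simp [Fin.val_last, hh]))
                omega
              exact IH (rd a) (rd b) (by simp [hrddef]; omega)
          · rw [← hDpr]
            exact S2 (L + 1) (by omega) (by omega)
        · exact S1 i j (by omega)
  have hall : ∀ p : Rn n, φ p ∈ E := by
    intro p
    have hp : p ∈ Algebra.adjoin ℂ (Set.range (X : Fin n × Fin n → Rn n)) := by
      rw [MvPolynomial.adjoin_range_X]; trivial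
    refine Algebra.adjoin_induction ?_ ?_ ?_ ?_ hp
    · rintro x ⟨s, rfl⟩
      exact main n s.1 s.2 s.2.2
    · intro cc
      have : φ (algebraMap ℂ (Rn n) cc) = algebraMap ℂ (Fn n) cc :=
        (IsScalarTower.algebraMap_apply ℂ (Rn n) (Fn n) cc).symm
      rw [this]
      exact E.algebraMap_mem cc
    · intro x y _ _ hx hy
      rw [map_add]
      exact add_mem hx hy
    · intro x y _ _ hx hy
      rw [map_mul]
      exact mul_mem hx hy
  rw [eq_top_iff]
  intro f _
  obtain ⟨p, q, -, rfl⟩ := IsFractionRing.div_surjective (A := Rn n) f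
  exact div_mem (hall p) (hall q)
end
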